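/- Let V be a normed space, M ⊆ V, and V_{n-1} a subset of V. Suppose the residual R(v,y) = ‖A(y)v − f(y)‖ satisfies r·‖u(y) − v‖ ≤ R(v,y) ≤ R·‖u(y) − v‖ for all v and y, where u(y) solves A(y)u(y) = f(y). If y_n satisfies inf_{v ∈ V_{n-1}} R(v, y_n) ≥ γ · sup_{y} inf_{v ∈ V_{n-1}} R(v, y) for some γ ∈ (0,1], then u_n = u(y_n) satisfies the weak greedy property inf_{v ∈ V_{n-1}} ‖u_n − v‖ ≥ (γ r / R) · sup_{y} inf_{v ∈ V_{n-1}} ‖u(y) − v‖. -/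
import Mathlib


theorem weak_greedy_from_residual
    {V : Type*} [NormedAddCommGroup V] {Y : Type*} [Nonempty Y]
    (u : Y → V) (Res : V → Y → ℝ)
    (Vn : Set V) (hVn : Vn.Nonempty)
    (r R : ℝ) (hr : 0 < r) (hrR : r ≤ R)
    (hequiv : ∀ (v : V) (y : Y),
      r * ‖u y - v‖ ≤ Res v y ∧ Res v y ≤ R * ‖u y - v‖)
    (hbd₁ : BddAbove (Set.range fun y : Y => ⨅ v : Vn, Res v y))
    (hbd₂ : BddAbove (Set.range fun y : Y => ⨅ v : Vn, ‖u y - (v : V)‖))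
    (γ : ℝ) (hγ₀ : 0 < γ) (hγ₁ : γ ≤ 1)
    (yn : Y)
    (hyn : (⨅ v : Vn, Res v yn) ≥ γ * ⨆ y : Y, ⨅ v : Vn, Res v y) :
    (⨅ v : Vn, ‖u yn - (v : V)‖) ≥
      (γ * r / R) * ⨆ y : Y, ⨅ v : Vn, ‖u y - (v : V)‖ := by
  have hR : (0:ℝ) < R := hr.trans_le hrR
  haveI : Nonempty Vn := hVn.to_subtype
  -- lower bounds for infima
  have hbelN : ∀ y : Y, BddBelow (Set.range fun v : Vn => ‖u y - (v:V)‖) := fun y =>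
    ⟨0, by rintro x ⟨v, rfl⟩; exact norm_nonneg _⟩
  have hbelR : ∀ y : Y, BddBelow (Set.range fun v : Vn => Res v y) := fun y =>
    ⟨0, by rintro x ⟨v, rfl⟩
           exact le_trans (mul_nonneg hr.le (norm_nonneg _)) (hequiv v y).1⟩
  -- r * d(y) ≤ ⨅ Res
  have hlow : ∀ y : Y, r * (⨅ v : Vn, ‖u y - (v:V)‖) ≤ ⨅ v : Vn, Res v y := by
    intro y
    refine le_ciInf fun v => le_trans ?_ (hequiv v y).1
    exact mul_le_mul_of_nonneg_left (ciInf_le (hbelN y) v) hr.le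
  -- ⨅ Res ≤ R * d(yn)
  have hup : (⨅ v : Vn, Res v yn) ≤ R * ⨅ v : Vn, ‖u yn - (v:V)‖ := by
    rw [Real.mul_iInf_of_nonneg hR.le]
    exact le_ciInf fun v => le_trans (ciInf_le (hbelR yn) v) (hequiv v yn).2
  -- r * sup d ≤ sup ⨅ Res
  have hsup : r * (⨆ y : Y, ⨅ v : Vn, ‖u y - (v:V)‖) ≤ ⨆ y : Y, ⨅ v : Vn, Res v y := by
    rw [Real.mul_iSup_of_nonneg hr.le]
    exact ciSup_le fun y => le_trans (hlow y) (le_ciSup hbd₁ y)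
  have key : γ * (r * ⨆ y : Y, ⨅ v : Vn, ‖u y - (v:V)‖) ≤ R * ⨅ v : Vn, ‖u yn - (v:V)‖ :=
    le_trans (mul_le_mul_of_nonneg_left hsup hγ₀.le) (le_trans hyn hup)
  rw [ge_iff_le, div_mul_eq_mul_div, div_le_iff₀ hR]
  calc γ * r * (⨆ y : Y, ⨅ v : Vn, ‖u y - (v:V)‖)
      = γ * (r * ⨆ y : Y, ⨅ v : Vn, ‖u y - (v:V)‖) := by ring
    _ ≤ R * ⨅ v : Vn, ‖u yn - (v:V)‖ := key
    _ = (⨅ v : Vn, ‖u yn - (v:V)‖) * R := mul_comm _ _
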